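/- Let $F$ be $\mu$-strongly convex and the sequence $\{\tilde w_t\}$ satisfy the recursion $F(\tilde w_t) - F(w_*) \leq (1 - \frac{\mu}{3}\eta_t)(F(\tilde w_{t-1}) - F(w_*)) + (\mu^2 + L^2)\sigma_*^2\eta_t^3$ for all $t \geq 1$, where $\eta_t := \frac{6}{\mu(t+\beta)}$ with $\beta \geq 12(L/\mu)^2 - 1$ and $\beta \geq 1$. Then for all $t \geq 1$: $F(\tilde w_t) - F(w_*) \leq \frac{\beta(\beta-1)}{(t+\beta)(t+\beta-1)}\Big[(F(\tilde w_0) - F(w_*)) + \frac{216(L^2+\mu^2)\sigma_*^2\log(t+\beta)}{\mu^3\beta(\beta-1)}\Big]$. -/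

import Mathlib

set_option maxHeartbeats 1000000


theorem stmt15 {E : Type*} [NormedAddCommGroup E] [InnerProductSpace ℝ E] [CompleteSpace E]
    (F : E → ℝ) (μ L σstar β : ℝ) (wstar : E) (tw : ℕ → E) (η : ℕ → ℝ)
    (hμ : 0 < μ) (hμL : μ ≤ L) (hσ : 0 ≤ σstar)
    (hsc : ∀ w v : E,
      F v + (inner ℝ (gradient F v) (w - v) : ℝ) + μ / 2 * ‖w - v‖ ^ 2 ≤ F w)
    (hβ1 : 1 ≤ β) (hβ2 : 12 * (L / μ) ^ 2 - 1 ≤ β)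
    (hnn : ∀ t : ℕ, 0 ≤ F (tw t) - F wstar)
    (hη : ∀ t : ℕ, η t = 6 / (μ * ((t : ℝ) + β)))
    (hrec : ∀ t : ℕ, 1 ≤ t →
      F (tw t) - F wstar ≤ (1 - μ / 3 * η t) * (F (tw (t - 1)) - F wstar)
        + (μ ^ 2 + L ^ 2) * σstar ^ 2 * η t ^ 3) :
    ∀ t : ℕ, 1 ≤ t →
      F (tw t) - F wstar ≤ β * (β - 1) / (((t : ℝ) + β) * ((t : ℝ) + β - 1)) *
        ((F (tw 0) - F wstar)
          + 216 * (L ^ 2 + μ ^ 2) * σstar ^ 2 * Real.log ((t : ℝ) + β) /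
            (μ ^ 3 * β * (β - 1))) := by
  -- β ≥ 11
  have hLμ : 1 ≤ L / μ := (one_le_div hμ).mpr hμL
  have hβ : (11 : ℝ) ≤ β := by nlinarith [sq_nonneg (L / μ - 1)]
  have hμ3 : (0:ℝ) < μ ^ 3 := by positivity
  set D : ℝ := (μ ^ 2 + L ^ 2) * σstar ^ 2 with hDdef
  have hD : 0 ≤ D := by positivity
  set B : ℝ := β * (β - 1) with hBdef
  have hBpos : 0 < B := by nlinarith
  set K : ℝ := 216 * (L ^ 2 + μ ^ 2) * σstar ^ 2 / (μ ^ 3 * β * (β - 1)) with hKdef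
  have hK : 0 ≤ K := by
    apply div_nonneg (by positivity)
    nlinarith
  have hβ0 : β ≠ 0 := by positivity
  have hβ1' : β - 1 ≠ 0 := by nlinarith
  have hBK : B * K = 216 * D / μ ^ 3 := by
    rw [hKdef, hBdef, hDdef]
    field_simp
    ring
  set Y : ℕ → ℝ := fun t => F (tw t) - F wstar with hYdef
  have key : ∀ t : ℕ, Y t ≤ B / (((t : ℝ) + β) * ((t : ℝ) + β - 1)) *
      (Y 0 + K * Real.log ((t : ℝ) + β)) := by
    intro t
    induction t with
    | zero =>
      have hlogβ : 0 ≤ Real.log β := Real.log_nonneg (by linarith)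
      have h0 : ((0:ℕ):ℝ) + β = β := by push_cast; ring
      rw [h0]
      have hBne : B ≠ 0 := ne_of_gt hBpos
      have : B / (β * (β - 1)) = 1 := by rw [← hBdef]; field_simp
      rw [this, one_mul]
      nlinarith [mul_nonneg hK hlogβ]
    | succ n ih =>
      set s : ℝ := (n : ℝ) + β with hsdef
      have hs : (11:ℝ) ≤ s := by
        have : (0:ℝ) ≤ (n:ℝ) := Nat.cast_nonneg n
        linarith
      have hs0 : (0:ℝ) < s := by linarith
      have hs1 : (0:ℝ) < s - 1 := by linarith
      have hs2 : (0:ℝ) < s + 1 := by linarith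
      have hcast : ((n+1 : ℕ) : ℝ) + β = s + 1 := by push_cast; ring
      have hr := hrec (n+1) (Nat.le_add_left 1 n)
      simp only [Nat.add_sub_cancel] at hr
      rw [hη (n+1), hcast] at hr
      have hc : 1 - μ / 3 * (6 / (μ * (s + 1))) = (s - 1) / (s + 1) := by
        field_simp
        ring
      rw [hc] at hr
      have hη3 : (μ ^ 2 + L ^ 2) * σstar ^ 2 * (6 / (μ * (s + 1))) ^ 3
          = 216 * D / (μ ^ 3 * (s + 1) ^ 3) := by
        rw [hDdef]; field_simp; ring
      rw [hη3] at hr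
      have hcnn : (0:ℝ) ≤ (s - 1) / (s + 1) := by positivity
      have h2 : Y (n+1) ≤ (s - 1) / (s + 1) * (B / (s * (s - 1)) * (Y 0 + K * Real.log s))
          + 216 * D / (μ ^ 3 * (s + 1) ^ 3) := by
        exact hr.trans (add_le_add_left (mul_le_mul_of_nonneg_left ih hcnn) _)
      have h3 : (s - 1) / (s + 1) * (B / (s * (s - 1)) * (Y 0 + K * Real.log s))
          = B / ((s + 1) * s) * (Y 0 + K * Real.log s) := by
        field_simp
      rw [h3] at h2
      -- log gain
      have hlog : 1 / (s + 1) ≤ Real.log (s + 1) - Real.log s := by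
        have h := Real.log_le_sub_one_of_pos (x := s / (s + 1)) (by positivity)
        rw [Real.log_div (ne_of_gt hs0) (ne_of_gt hs2)] at h
        have : s / (s + 1) - 1 = -(1 / (s + 1)) := by field_simp; ring
        linarith [this ▸ h]
      have key2 : 216 * D / (μ ^ 3 * (s + 1) ^ 3)
          ≤ B / ((s + 1) * s) * K * (Real.log (s + 1) - Real.log s) := by
        have e1 : B / ((s + 1) * s) * K = (216 * D / μ ^ 3) / ((s + 1) * s) := by
          rw [div_mul_eq_mul_div, hBK]
        rw [e1]
        have hDμ : 0 ≤ 216 * D / μ ^ 3 := by positivity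
        have step1 : (216 * D / μ ^ 3) / ((s + 1) * s) * (1 / (s + 1))
            ≤ (216 * D / μ ^ 3) / ((s + 1) * s) * (Real.log (s + 1) - Real.log s) := by
          apply mul_le_mul_of_nonneg_left hlog (by positivity)
        refine le_trans ?_ step1
        rw [div_mul_div_comm, mul_one, div_div]
        have hden : (0:ℝ) < μ ^ 3 * ((s + 1) * s * (s + 1)) := by positivity
        have hle : μ ^ 3 * ((s + 1) * s * (s + 1)) ≤ μ ^ 3 * (s + 1) ^ 3 := by
          nlinarith [mul_nonneg hμ3.le (sq_nonneg (s + 1))]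
        exact div_le_div_of_nonneg_left (by positivity) hden hle
      have hfinal : Y (n+1) ≤ B / ((s + 1) * s) * (Y 0 + K * Real.log (s + 1)) := by
        have := add_le_add_right key2 (B / ((s + 1) * s) * (Y 0 + K * Real.log s))
        calc Y (n+1) ≤ B / ((s + 1) * s) * (Y 0 + K * Real.log s)
              + 216 * D / (μ ^ 3 * (s + 1) ^ 3) := h2
          _ ≤ B / ((s + 1) * s) * (Y 0 + K * Real.log s)
              + B / ((s + 1) * s) * K * (Real.log (s + 1) - Real.log s) := this
          _ = B / ((s + 1) * s) * (Y 0 + K * Real.log (s + 1)) := by ring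
      rw [hcast, show s + 1 - 1 = s by ring]
      exact hfinal
  intro t ht
  have := key t
  calc F (tw t) - F wstar ≤ B / (((t : ℝ) + β) * ((t : ℝ) + β - 1)) *
      (Y 0 + K * Real.log ((t : ℝ) + β)) := this
    _ = β * (β - 1) / (((t : ℝ) + β) * ((t : ℝ) + β - 1)) *
        ((F (tw 0) - F wstar)
          + 216 * (L ^ 2 + μ ^ 2) * σstar ^ 2 * Real.log ((t : ℝ) + β) /
            (μ ^ 3 * β * (β - 1))) := by
        rw [hBdef, hKdef, hYdef]
        ring
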